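/- For every z ∈ ℂ⁵, the quadratic invariant I₂ = Σ_{i,j,k} T(z)_{ijk} · T(z)_{ikj} equals (z¹)² + (z²)² + (z³)² + 2q·z⁴·z⁵, where q = exp(2πi/3). -/

import Mathlib

open Complex Matrix BigOperators Finset

noncomputable section

/-- The primitive cube root of unity `q = exp(2πi/3)`. -/
def q : ℂ := Complex.exp (2 * Real.pi * Complex.I / 3)

/-- A rank-3 tensor in 3-dimensional space. -/
abbrev Tensor3 := Fin 3 → Fin 3 → Fin 3 → ℂ

/-- Condition T1: every trace of the tensor vanishes. -/
def CondT1 (T : Tensor3) : Prop :=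
  ∀ j : Fin 3, (∑ i, T i i j = 0) ∧ (∑ i, T i j i = 0) ∧ (∑ i, T j i i = 0)

/-- Condition T2: all cyclic sums vanish. -/
def CondT2 (T : Tensor3) : Prop :=
  ∀ i j k : Fin 3, T i j k + T j k i + T k i j = 0

/-- The cyclic permutation operator `Φ_σ` on rank-3 tensors. -/
def Phi (T : Tensor3) : Tensor3 := fun i j k => T j k i

/-- Action of a real 3×3 matrix on a rank-3 tensor. -/
def gact (g : Matrix (Fin 3) (Fin 3) ℝ) (T : Tensor3) : Tensor3 :=
  fun i j k => ∑ p, ∑ r, ∑ s, (g i p : ℂ) * (g j r : ℂ) * (g k s : ℂ) * T p r s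

/-- The tensor `T(z)` associated with a point `z ∈ ℂ⁵`. -/
def Tz (z : Fin 5 → ℂ) : Tensor3 :=
  ![![![0, -(star q) * z 1 / (Real.sqrt 6 : ℂ), (star q) * z 2 / (Real.sqrt 6 : ℂ)],
     ![-q * z 1 / (Real.sqrt 6 : ℂ), z 0 / (Real.sqrt 6 : ℂ), z 3 / (Real.sqrt 3 : ℂ)],
     ![q * z 2 / (Real.sqrt 6 : ℂ), q * z 4 / (Real.sqrt 3 : ℂ), -(z 0) / (Real.sqrt 6 : ℂ)]],
    ![![-(z 1) / (Real.sqrt 6 : ℂ), q * z 0 / (Real.sqrt 6 : ℂ), (star q) * z 4 / (Real.sqrt 3 : ℂ)],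
     ![(star q) * z 0 / (Real.sqrt 6 : ℂ), 0, -(star q) * z 2 / (Real.sqrt 6 : ℂ)],
     ![(star q) * z 3 / (Real.sqrt 3 : ℂ), -q * z 2 / (Real.sqrt 6 : ℂ), z 1 / (Real.sqrt 6 : ℂ)]],
    ![![z 2 / (Real.sqrt 6 : ℂ), q * z 3 / (Real.sqrt 3 : ℂ), -q * z 0 / (Real.sqrt 6 : ℂ)],
     ![z 4 / (Real.sqrt 3 : ℂ), -(z 2) / (Real.sqrt 6 : ℂ), q * z 1 / (Real.sqrt 6 : ℂ)],
     ![-(star q) * z 0 / (Real.sqrt 6 : ℂ), (star q) * z 1 / (Real.sqrt 6 : ℂ), 0]]]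

/-- The matrix `K` of the invariant quadratic form
`K(z,z) = (z¹)² + (z²)² + (z³)² + 2q z⁴ z⁵`. -/
def Kmat : Matrix (Fin 5) (Fin 5) ℂ :=
  !![1, 0, 0, 0, 0;
     0, 1, 0, 0, 0;
     0, 0, 1, 0, 0;
     0, 0, 0, 0, q;
     0, 0, 0, q, 0]

/-- The matrix `ρ_τ` of the infinitesimal action of `so(3)` on `ℂ⁵`. -/
def rho (τ₁ τ₂ τ₃ : ℝ) : Matrix (Fin 5) (Fin 5) ℂ :=
  !![0, (τ₃ : ℂ), -(τ₂ : ℂ), -(Real.sqrt 2 : ℂ) * τ₁, -(Real.sqrt 2 : ℂ) * q * τ₁;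
     -(τ₃ : ℂ), 0, (τ₁ : ℂ), -(Real.sqrt 2 : ℂ) * (star q) * τ₂, -(Real.sqrt 2 : ℂ) * (star q) * τ₂;
     (τ₂ : ℂ), -(τ₁ : ℂ), 0, -(Real.sqrt 2 : ℂ) * q * τ₃, -(Real.sqrt 2 : ℂ) * τ₃;
     (Real.sqrt 2 : ℂ) * τ₁, (Real.sqrt 2 : ℂ) * q * τ₂, (Real.sqrt 2 : ℂ) * (star q) * τ₃, 0, 0;
     (Real.sqrt 2 : ℂ) * (star q) * τ₁, (Real.sqrt 2 : ℂ) * q * τ₂, (Real.sqrt 2 : ℂ) * τ₃, 0, 0]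

/-- The invariant `I₂ = Σ T_{ijk}T_{ikj}` evaluated on `T(z)`
equals `(z¹)² + (z²)² + (z³)² + 2q z⁴ z⁵`. -/
theorem q_cube : q^3 = 1 := by
  rw [q, ← Complex.exp_nat_mul]
  rw [show ((3:ℕ):ℂ) * (2 * Real.pi * Complex.I / 3) = 2 * Real.pi * Complex.I by push_cast; ring]
  exact Complex.exp_two_pi_mul_I

theorem star_q : star q = q^2 := by
  rw [q, Complex.star_def, ← Complex.exp_conj, ← Complex.exp_nat_mul]
  have : (starRingEnd ℂ) (2 * Real.pi * Complex.I / 3)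
      = ((2:ℕ):ℂ) * (2 * Real.pi * Complex.I / 3) + (-(2 * Real.pi * Complex.I)) := by
    have h2 : (starRingEnd ℂ) (2 * Real.pi * Complex.I / 3)
        = (2 * Real.pi * (-Complex.I) / 3) := by
      simp [map_div₀, Complex.conj_I, Complex.conj_ofReal, Complex.conj_ofNat]
    rw [h2]; push_cast; ring
  rw [this, Complex.exp_add]
  simp [Complex.exp_neg, Complex.exp_two_pi_mul_I]

set_option maxHeartbeats 2000000 in
theorem Tz_invariant_I2 (z : Fin 5 → ℂ) :
    ∑ i, ∑ j, ∑ k, Tz z i j k * Tz z i k j =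
      (z 0)^2 + (z 1)^2 + (z 2)^2 + 2 * q * z 3 * z 4 := by
  have h6 : (Real.sqrt 6 : ℂ) * (Real.sqrt 6 : ℂ) = 6 := by
    rw [← Complex.ofReal_mul, Real.mul_self_sqrt (by norm_num)]; norm_num
  have h3 : (Real.sqrt 3 : ℂ) * (Real.sqrt 3 : ℂ) = 3 := by
    rw [← Complex.ofReal_mul, Real.mul_self_sqrt (by norm_num)]; norm_num
  have h6' : (Real.sqrt 6 : ℂ) ≠ 0 := by
    simpa using (by positivity : Real.sqrt 6 ≠ 0)
  have h3' : (Real.sqrt 3 : ℂ) ≠ 0 := by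
    simpa using (by positivity : Real.sqrt 3 ≠ 0)
  have hq4 : q^4 = q := by rw [show q^4 = q^3 * q by ring, q_cube, one_mul]
  simp only [Tz, star_q, Fin.sum_univ_three, Matrix.cons_val_zero, Matrix.cons_val_one,
    Matrix.head_cons, Matrix.cons_val_two, Matrix.tail_cons]
  field_simp
  ring_nf
  rw [q_cube, hq4] <;> ring_nf
  have p6 : (Real.sqrt 6 : ℂ)^2 = 6 := by rw [sq, h6]
  have p3 : (Real.sqrt 3 : ℂ)^2 = 3 := by rw [sq, h3]
  rw [p6, p3]
  ring

end
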